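/- Let A and B be linear orders and let C be a finite chain in the product partial order A × B. For K ⊆ C write π₁K and π₂K for the images of K under the two coordinate projections. Call K ⊆ C rigid if for every (a,b) ∈ C ∖ K, either a ∉ π₁K or b ∉ π₂K. Then: (i) for every K ⊆ C, the set K^r := { (a,b) ∈ C : a ∈ π₁K and b ∈ π₂K } is rigid, contains K, and satisfies π₁K^r = π₁K and π₂K^r = π₂K; (ii) if K₁, K₂ ⊆ C are both rigid with π₁K₁ = π₁K₂ and π₂K₁ = π₂K₂, then K₁ = K₂. Consequently, each fiber of the map K ↦ (π₁K, π₂K) on subsets of C contains a unique rigid element, which is its greatest element under inclusion. -/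
import Mathlib


/-- K is rigid in C: for every (a,b) ∈ C ∖ K, either a is not a first
coordinate of K or b is not a second coordinate of K. -/
def Rigid {A B : Type*} [DecidableEq A] [DecidableEq B]
    (C K : Finset (A × B)) : Prop :=
  ∀ p ∈ C, p ∉ K → (p.1 ∉ K.image Prod.fst ∨ p.2 ∉ K.image Prod.snd)

/-- K^r = { (a,b) ∈ C : a ∈ π₁K and b ∈ π₂K }. -/
def rigidify {A B : Type*} [DecidableEq A] [DecidableEq B]
    (C K : Finset (A × B)) : Finset (A × B) :=
  C.filter fun p => p.1 ∈ K.image Prod.fst ∧ p.2 ∈ K.image Prod.snd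

/-- for a finite chain C in the product order on A × B,
(i) K^r is rigid, contains K and has the same coordinate projections;
(ii) rigid subsets with equal projections are equal; consequently each fiber
of K ↦ (π₁K, π₂K) contains a unique rigid element, its greatest element. -/
theorem stmt_6 {A B : Type*} [LinearOrder A] [LinearOrder B]
    (C : Finset (A × B)) (hC : IsChain (· ≤ ·) (C : Set (A × B))) :
    (∀ K ⊆ C,
      Rigid C (rigidify C K) ∧ K ⊆ rigidify C K ∧
      (rigidify C K).image Prod.fst = K.image Prod.fst ∧
      (rigidify C K).image Prod.snd = K.image Prod.snd) ∧
    (∀ K₁ K₂, K₁ ⊆ C → K₂ ⊆ C → Rigid C K₁ → Rigid C K₂ →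
      K₁.image Prod.fst = K₂.image Prod.fst →
      K₁.image Prod.snd = K₂.image Prod.snd → K₁ = K₂) ∧
    (∀ K K', K ⊆ C → K' ⊆ C →
      K'.image Prod.fst = K.image Prod.fst →
      K'.image Prod.snd = K.image Prod.snd → K' ⊆ rigidify C K) := by
  clear hC
  have hsub : ∀ K ⊆ C, K ⊆ rigidify C K := by
    intro K hK p hp
    simp only [rigidify, Finset.mem_filter]
    exact ⟨hK hp, Finset.mem_image_of_mem _ hp, Finset.mem_image_of_mem _ hp⟩
  have hproj : ∀ K ⊆ C,
      (rigidify C K).image Prod.fst = K.image Prod.fst ∧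
      (rigidify C K).image Prod.snd = K.image Prod.snd := by
    intro K hK
    constructor
    · apply Finset.Subset.antisymm
      · intro a ha
        obtain ⟨p, hp, rfl⟩ := Finset.mem_image.mp ha
        exact (Finset.mem_filter.mp hp).2.1
      · exact Finset.image_subset_image (hsub K hK)
    · apply Finset.Subset.antisymm
      · intro b hb
        obtain ⟨p, hp, rfl⟩ := Finset.mem_image.mp hb
        exact (Finset.mem_filter.mp hp).2.2
      · exact Finset.image_subset_image (hsub K hK)
  refine ⟨?_, ?_, ?_⟩
  · intro K hK
    refine ⟨?_, hsub K hK, hproj K hK⟩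
    intro p hp hpn
    by_contra h
    push_neg at h
    obtain ⟨h1, h2⟩ := h
    rw [(hproj K hK).1] at h1
    rw [(hproj K hK).2] at h2
    exact hpn (Finset.mem_filter.mpr ⟨hp, h1, h2⟩)
  · intro K₁ K₂ h₁ h₂ r₁ r₂ e1 e2
    apply Finset.Subset.antisymm
    · intro p hp
      by_contra hpn
      rcases r₂ p (h₁ hp) hpn with h | h
      · exact h (e1 ▸ Finset.mem_image_of_mem _ hp)
      · exact h (e2 ▸ Finset.mem_image_of_mem _ hp)
    · intro p hp
      by_contra hpn
      rcases r₁ p (h₂ hp) hpn with h | h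
      · exact h (e1.symm ▸ Finset.mem_image_of_mem _ hp)
      · exact h (e2.symm ▸ Finset.mem_image_of_mem _ hp)
  · intro K K' hK hK' e1 e2 p hp
    refine Finset.mem_filter.mpr ⟨hK' hp, ?_, ?_⟩
    · exact e1 ▸ Finset.mem_image_of_mem _ hp
    · exact e2 ▸ Finset.mem_image_of_mem _ hp
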